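/- Advantage characterization of soft-optimality (Proposition opt_cond, part 1): Let β > 0, let r be a bounded measurable reward, and let π be a Markov policy whose kernels have ν-densities π_t(a|s) with log π_t bounded measurable. Then π coincides with the soft-optimal policy π*_r (i.e. π_t(·|s) = π*_{t,r}(·|s) for all t and all s ∈ S) if and only if the regularized advantage vanishes: A^π_{t,r}(s,a) = 0 for all t ∈ {1,…,T}, all s ∈ S, and ν-almost every a ∈ A. -/

import Mathlib

open MeasureTheory ProbabilityTheory Real
open scoped ENNReal RealInnerProductSpace

noncomputable section

namespace IRL

variable {S A : Type*} [MeasurableSpace S] [MeasurableSpace A]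

/-- A reward tuple `(r_t)` of bounded measurable functions. -/
def IsBddReward (r : ℕ → S → A → ℝ) : Prop :=
  ∀ t, Measurable (fun q : S × A => r t q.1 q.2) ∧ ∃ C, ∀ s a, |r t s a| ≤ C

/-- `p` is a family of `ν`-probability densities of a Markov policy. -/
def IsPolicyDensity (ν : Measure A) (p : ℕ → S → A → ℝ) : Prop :=
  (∀ t, Measurable (fun q : S × A => p t q.1 q.2)) ∧ (∀ t s a, 0 ≤ p t s a) ∧
    (∀ t s, ∫ a, p t s a ∂ν = 1)

/-- the log-densities `log π_t` are bounded (in particular the densities are positive). -/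
def HasBddLogDensity (p : ℕ → S → A → ℝ) : Prop :=
  ∀ t, (∀ s a, 0 < p t s a) ∧ ∃ C, ∀ s a, |Real.log (p t s a)| ≤ C

variable (T : ℕ) (P : ℕ → Kernel (S × A) S) (ν : Measure A)

/-- Soft-optimal value function `V*_{t,r}` (backward recursion, `V* t ≡ 0` for `t > T`). -/
def Vstar (β : ℝ) (r : ℕ → S → A → ℝ) (t : ℕ) (s : S) : ℝ :=
  if T < t then 0
  else β * Real.log (∫ a, Real.exp ((r t s a + ∫ s', Vstar β r (t + 1) s' ∂(P t (s, a))) / β) ∂ν)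
termination_by T + 1 - t
decreasing_by omega

/-- Soft-optimal state-action value `Q*_{t,r}`. -/
def Qstar (β : ℝ) (r : ℕ → S → A → ℝ) (t : ℕ) (s : S) (a : A) : ℝ :=
  r t s a + ∫ s', Vstar T P ν β r (t + 1) s' ∂(P t (s, a))

/-- `ν`-density of the soft-optimal policy `π*_r`. -/
def piStar (β : ℝ) (r : ℕ → S → A → ℝ) (t : ℕ) (s : S) (a : A) : ℝ :=
  Real.exp ((Qstar T P ν β r t s a - Vstar T P ν β r t s) / β)

/-- Value function `V^π_{t,r}` of a policy given by densities `p` (with `β = 0` this is the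
unregularized value function `V^{π,0}`). -/
def Vpol (β : ℝ) (p r : ℕ → S → A → ℝ) (t : ℕ) (s : S) : ℝ :=
  if T < t then 0
  else ∫ a,
    (r t s a + (∫ s', Vpol β p r (t + 1) s' ∂(P t (s, a))) - β * Real.log (p t s a)) * p t s a ∂ν
termination_by T + 1 - t
decreasing_by omega

/-- `Q^π_{t,r}` for a policy given by densities `p`. -/
def Qpol (β : ℝ) (p r : ℕ → S → A → ℝ) (t : ℕ) (s : S) (a : A) : ℝ :=
  r t s a + ∫ s', Vpol T P ν β p r (t + 1) s' ∂(P t (s, a))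

/-- Regularized advantage `A^π_{t,r}(s,a) = Q^π - V^π - β log π_t(a|s)`. -/
def Apol (β : ℝ) (p r : ℕ → S → A → ℝ) (t : ℕ) (s : S) (a : A) : ℝ :=
  Qpol T P ν β p r t s a - Vpol T P ν β p r t s - β * Real.log (p t s a)

variable (P0 : Measure S)

/-- Optimal value `J*(r) = ∫ V*_{1,r} dP₀`. -/
def Jstar (β : ℝ) (r : ℕ → S → A → ℝ) : ℝ := ∫ s, Vstar T P ν β r 1 s ∂P0

/-- Expected (regularized) return `J(r,π)` of a density policy. -/
def Jpol (β : ℝ) (p r : ℕ → S → A → ℝ) : ℝ := ∫ s, Vpol T P ν β p r 1 s ∂P0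

/-- Iterated expectation, from time `t` in state `s`, of a trajectory functional `g` under a
(kernel) Markov policy `π`; coordinates of the trajectory outside `{1,…,T}` are irrelevant
junk values. -/
def polExp [Nonempty S] [Nonempty A] (pol : ℕ → Kernel S A) (g : (ℕ → S × A) → ℝ) (t : ℕ)
    (s : S) : ℝ :=
  if T < t then g (fun _ => (Classical.arbitrary S, Classical.arbitrary A))
  else ∫ a, ∫ s', polExp pol (fun τ => g (Function.update τ t (s, a))) (t + 1) s' ∂(P t (s, a))
    ∂(pol t s)
termination_by T + 1 - t
decreasing_by omega

/-- `μ` is the trajectory law `P^π` of the Markov policy `π` (with initial distribution `P₀`),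
characterized through integrals of all bounded measurable trajectory functionals. -/
def IsTrajLaw [Nonempty S] [Nonempty A] (pol : ℕ → Kernel S A) (μ : Measure (ℕ → S × A)) : Prop :=
  IsProbabilityMeasure μ ∧
    ∀ g : (ℕ → S × A) → ℝ, Measurable g → (∃ C, ∀ τ, |g τ| ≤ C) →
      ∫ τ, g τ ∂μ = ∫ s, polExp T P pol g 1 s ∂P0

/-- The kernel `s ↦ p t s ⬝ ν` of a policy given by densities. -/
def densKernel [IsFiniteMeasure ν] (p : ℕ → S → A → ℝ) (t : ℕ) : Kernel S A :=
  Kernel.withDensity (Kernel.const S ν) fun s a => ENNReal.ofReal (p t s a)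

open Classical in
/-- Kullback–Leibler divergence `∫ log (dμ/dμ') dμ` if `μ ≪ μ'` (`∞` otherwise). -/
def KL {X : Type*} [MeasurableSpace X] (μ μ' : Measure X) : ℝ≥0∞ :=
  if μ ≪ μ' ∧ Integrable (fun x => Real.log (μ.rnDeriv μ' x).toReal) μ then
    ENNReal.ofReal (∫ x, Real.log (μ.rnDeriv μ' x).toReal ∂μ)
  else ⊤

/-- Squared Hellinger distance, computed with the dominating measure `μ + μ'`. -/
def sqHellinger {X : Type*} [MeasurableSpace X] (μ μ' : Measure X) : ℝ :=
  ∫ x, (Real.sqrt ((μ.rnDeriv (μ + μ') x).toReal)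
      - Real.sqrt ((μ'.rnDeriv (μ + μ') x).toReal)) ^ 2 ∂(μ + μ')

/-- Second directional derivative. -/
def D2 {E : Type*} [NormedAddCommGroup E] [NormedSpace ℝ E] (F : E → ℝ) (θ ξ ζ : E) : ℝ :=
  fderiv ℝ (fun x => fderiv ℝ F x ζ) θ ξ

/-- Third directional derivative. -/
def D3 {E : Type*} [NormedAddCommGroup E] [NormedSpace ℝ E] (F : E → ℝ) (θ ξ ζ ω : E) : ℝ :=
  fderiv ℝ (fun x => D2 F x ζ ω) θ ξ

end IRL

open MeasureTheory ProbabilityTheory Real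
open scoped ENNReal
namespace IRLAux
open IRL MeasureTheory ProbabilityTheory Real Filter
open scoped ENNReal

variable {S A : Type*} [MeasurableSpace S] [MeasurableSpace A]

/-- bounded measurable function on `S`. -/
def BM (f : S → ℝ) : Prop := Measurable f ∧ ∃ C, ∀ s, |f s| ≤ C

/-- bounded (jointly) measurable function on `S × A`. -/
def BM2 (f : S → A → ℝ) : Prop :=
  Measurable (fun q : S × A => f q.1 q.2) ∧ ∃ C, ∀ s a, |f s a| ≤ C

lemma BM2.meas_slice {f : S → A → ℝ} (hf : BM2 f) (s : S) : Measurable (f s) :=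
  hf.1.comp measurable_prodMk_left

lemma BM2.integrable {f : S → A → ℝ} {ν : Measure A} [IsFiniteMeasure ν] (hf : BM2 f) (s : S) :
    Integrable (f s) ν := by
  obtain ⟨C, hC⟩ := hf.2
  exact ⟨(hf.meas_slice s).aestronglyMeasurable,
    HasFiniteIntegral.of_bounded (C := C) (Eventually.of_forall fun a => by
      simpa [Real.norm_eq_abs] using hC s a)⟩

lemma BM.kernelInt {g : S → ℝ} (hg : BM g) (κ : Kernel (S × A) S) [IsMarkovKernel κ] :
    BM2 (fun s a => ∫ s', g s' ∂ κ (s, a)) := by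
  obtain ⟨hm, C, hC⟩ := hg
  refine ⟨?_, C, fun s a => ?_⟩
  · have h1 : StronglyMeasurable (fun q : (S × A) × S => g q.2) :=
      hm.stronglyMeasurable.comp_measurable measurable_snd
    exact h1.integral_kernel_prod_right'.measurable
  · have h := norm_integral_le_of_norm_le_const (μ := κ (s, a)) (f := g) (C := C)
      (Eventually.of_forall fun s' => by simpa [Real.norm_eq_abs] using hC s')
    simpa [Real.norm_eq_abs, measure_univ] using h

lemma BM2.exp_div {β : ℝ} (hβ : 0 < β) {f : S → A → ℝ} (hf : BM2 f) :
    BM2 (fun s a => Real.exp (f s a / β)) := by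
  obtain ⟨hm, C, hC⟩ := hf
  refine ⟨(hm.div_const β).exp, Real.exp (C / β), fun s a => ?_⟩
  rw [abs_of_pos (Real.exp_pos _)]
  exact Real.exp_le_exp.mpr (div_le_div_of_nonneg_right ((le_abs_self _).trans (hC s a)) hβ.le)

lemma lse_pos {ν : Measure A} [IsFiniteMeasure ν] (hν : ν Set.univ ≠ 0) {β : ℝ} (hβ : 0 < β)
    {f : S → A → ℝ} (hf : BM2 f) (s : S) :
    0 < ∫ a, Real.exp (f s a / β) ∂ν := by
  obtain ⟨C, hC⟩ := hf.2
  have hint := (hf.exp_div hβ).integrable (ν := ν) s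
  have hmono : ∀ a, Real.exp (-C / β) ≤ Real.exp (f s a / β) := fun a =>
    Real.exp_le_exp.mpr (div_le_div_of_nonneg_right (abs_le.mp (hC s a)).1 hβ.le)
  calc (0:ℝ) < Real.exp (-C / β) * (ν Set.univ).toReal :=
        mul_pos (Real.exp_pos _) (ENNReal.toReal_pos hν (measure_ne_top ν _))
    _ = ∫ _a, Real.exp (-C / β) ∂ν := by rw [integral_const, smul_eq_mul, mul_comm]; rfl
    _ ≤ ∫ a, Real.exp (f s a / β) ∂ν := integral_mono (integrable_const _) hint hmono

lemma lse_BM {ν : Measure A} [IsFiniteMeasure ν] (hν : ν Set.univ ≠ 0) {β : ℝ} (hβ : 0 < β)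
    {f : S → A → ℝ} (hf : BM2 f) :
    BM (fun s => β * Real.log (∫ a, Real.exp (f s a / β) ∂ν)) := by
  obtain ⟨hm, C, hC⟩ := hf
  have hmI : Measurable (fun s => ∫ a, Real.exp (f s a / β) ∂ν) :=
    ((hm.div_const β).exp.stronglyMeasurable.integral_prod_right').measurable
  refine ⟨(hmI.log).const_mul β, ?_⟩
  set u := (ν Set.univ).toReal with hu
  have hupos : 0 < u := ENNReal.toReal_pos hν (measure_ne_top ν _)
  set lo := Real.exp (-C / β) * u with hlo
  set hi := Real.exp (C / β) * u with hhi
  have hlopos : 0 < lo := mul_pos (Real.exp_pos _) hupos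
  refine ⟨β * (|Real.log lo| + |Real.log hi|), fun s => ?_⟩
  have hint : Integrable (fun a => Real.exp (f s a / β)) ν :=
    BM2.integrable (BM2.exp_div hβ ⟨hm, C, hC⟩) s
  have h1 : lo ≤ ∫ a, Real.exp (f s a / β) ∂ν := by
    calc lo = ∫ _a, Real.exp (-C / β) ∂ν := by
          rw [integral_const, smul_eq_mul, mul_comm]; rfl
      _ ≤ _ := integral_mono (integrable_const _) hint fun a =>
          Real.exp_le_exp.mpr (div_le_div_of_nonneg_right (abs_le.mp (hC s a)).1 hβ.le)
  have h2 : ∫ a, Real.exp (f s a / β) ∂ν ≤ hi := by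
    calc ∫ a, Real.exp (f s a / β) ∂ν ≤ ∫ _a, Real.exp (C / β) ∂ν :=
          integral_mono hint (integrable_const _) fun a =>
            Real.exp_le_exp.mpr (div_le_div_of_nonneg_right (abs_le.mp (hC s a)).2 hβ.le)
      _ = hi := by rw [integral_const, smul_eq_mul, mul_comm]; rfl
  have hIlog1 : Real.log lo ≤ Real.log (∫ a, Real.exp (f s a / β) ∂ν) :=
    Real.log_le_log hlopos h1
  have hIlog2 : Real.log (∫ a, Real.exp (f s a / β) ∂ν) ≤ Real.log hi :=
    Real.log_le_log (hlopos.trans_le h1) h2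
  have habs : |Real.log (∫ a, Real.exp (f s a / β) ∂ν)| ≤ |Real.log lo| + |Real.log hi| := by
    have h3 := neg_abs_le (Real.log lo)
    have h4 := le_abs_self (Real.log hi)
    have h5 := abs_nonneg (Real.log lo)
    have h6 := abs_nonneg (Real.log hi)
    exact abs_le.mpr ⟨by linarith, by linarith⟩
  rw [abs_mul, abs_of_pos hβ]
  exact mul_le_mul_of_nonneg_left habs hβ.le

end IRLAux
namespace IRLAux
open IRL MeasureTheory ProbabilityTheory Real Filter
open scoped ENNReal

variable {S A : Type*} [MeasurableSpace S] [MeasurableSpace A]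

lemma BM2.add {f g : S → A → ℝ} (hf : BM2 f) (hg : BM2 g) :
    BM2 (fun s a => f s a + g s a) := by
  obtain ⟨hmf, Cf, hCf⟩ := hf; obtain ⟨hmg, Cg, hCg⟩ := hg
  exact ⟨hmf.add hmg, Cf + Cg, fun s a =>
    (abs_add_le _ _).trans (add_le_add (hCf s a) (hCg s a))⟩

lemma BM2.sub {f g : S → A → ℝ} (hf : BM2 f) (hg : BM2 g) :
    BM2 (fun s a => f s a - g s a) := by
  obtain ⟨hmf, Cf, hCf⟩ := hf; obtain ⟨hmg, Cg, hCg⟩ := hg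
  exact ⟨hmf.sub hmg, Cf + Cg, fun s a =>
    (abs_sub _ _).trans (add_le_add (hCf s a) (hCg s a))⟩

lemma BM2.mul {f g : S → A → ℝ} (hf : BM2 f) (hg : BM2 g) :
    BM2 (fun s a => f s a * g s a) := by
  obtain ⟨hmf, Cf, hCf⟩ := hf; obtain ⟨hmg, Cg, hCg⟩ := hg
  refine ⟨hmf.mul hmg, |Cf| * |Cg|, fun s a => ?_⟩
  rw [abs_mul]
  exact mul_le_mul ((hCf s a).trans (le_abs_self _)) ((hCg s a).trans (le_abs_self _))
    (abs_nonneg _) (abs_nonneg _)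

lemma BM2.const_mul {f : S → A → ℝ} (hf : BM2 f) (c : ℝ) :
    BM2 (fun s a => c * f s a) := by
  obtain ⟨hmf, Cf, hCf⟩ := hf
  refine ⟨hmf.const_mul c, |c| * Cf, fun s a => ?_⟩
  rw [abs_mul]
  exact mul_le_mul_of_nonneg_left (hCf s a) (abs_nonneg _)

lemma BM2.intNu {ν : Measure A} [IsFiniteMeasure ν] {f : S → A → ℝ} (hf : BM2 f) :
    BM (fun s => ∫ a, f s a ∂ν) := by
  obtain ⟨hm, C, hC⟩ := hf
  refine ⟨(hm.stronglyMeasurable.integral_prod_right').measurable,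
    C * (ν Set.univ).toReal, fun s => ?_⟩
  have h := norm_integral_le_of_norm_le_const (μ := ν) (f := fun a => f s a) (C := C)
    (Eventually.of_forall fun a => by simpa [Real.norm_eq_abs] using hC s a)
  simpa [Real.norm_eq_abs, Measure.real] using h

lemma Vstar_BM (T : ℕ) (P : ℕ → Kernel (S × A) S) [∀ t, IsMarkovKernel (P t)]
    (ν : Measure A) [IsFiniteMeasure ν] (hν : ν Set.univ ≠ 0) {β : ℝ} (hβ : 0 < β)
    {r : ℕ → S → A → ℝ} (hr : IsBddReward r) :
    ∀ t, BM (Vstar T P ν β r t) := by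
  have H : ∀ k t, T + 1 - t ≤ k → BM (Vstar T P ν β r t) := by
    intro k
    induction k with
    | zero =>
      intro t ht
      have h : T < t := by omega
      have he : Vstar T P ν β r t = fun _ => 0 := funext fun s => by rw [Vstar, if_pos h]
      rw [he]; exact ⟨measurable_const, 0, fun s => by simp⟩
    | succ k ih =>
      intro t ht
      by_cases hTt : T < t
      · have he : Vstar T P ν β r t = fun _ => 0 := funext fun s => by rw [Vstar, if_pos hTt]
        rw [he]; exact ⟨measurable_const, 0, fun s => by simp⟩
      · have hnext : BM (Vstar T P ν β r (t + 1)) := ih (t + 1) (by omega)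
        have hQ : BM2 (fun s a => r t s a + ∫ s', Vstar T P ν β r (t + 1) s' ∂(P t (s, a))) :=
          BM2.add ⟨(hr t).1, (hr t).2⟩ (hnext.kernelInt (P t))
        have hmain := lse_BM hν hβ hQ
        have he : Vstar T P ν β r t = fun s => β * Real.log
            (∫ a, Real.exp ((r t s a + ∫ s', Vstar T P ν β r (t + 1) s' ∂(P t (s, a))) / β) ∂ν) :=
          funext fun s => by rw [Vstar, if_neg hTt]
        rw [he]; exact hmain
  exact fun t => H (T + 1) t (by omega)

lemma Vpol_BM (T : ℕ) (P : ℕ → Kernel (S × A) S) [∀ t, IsMarkovKernel (P t)]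
    (ν : Measure A) [IsFiniteMeasure ν] {β : ℝ} {p r : ℕ → S → A → ℝ}
    (hrB : ∀ t, BM2 (r t)) (hpB : ∀ t, BM2 (p t))
    (hlogpB : ∀ t, BM2 (fun s a => Real.log (p t s a))) :
    ∀ t, BM (Vpol T P ν β p r t) := by
  have H : ∀ k t, T + 1 - t ≤ k → BM (Vpol T P ν β p r t) := by
    intro k
    induction k with
    | zero =>
      intro t ht
      have h : T < t := by omega
      have he : Vpol T P ν β p r t = fun _ => 0 := funext fun s => by rw [Vpol, if_pos h]
      rw [he]; exact ⟨measurable_const, 0, fun s => by simp⟩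
    | succ k ih =>
      intro t ht
      by_cases hTt : T < t
      · have he : Vpol T P ν β p r t = fun _ => 0 := funext fun s => by rw [Vpol, if_pos hTt]
        rw [he]; exact ⟨measurable_const, 0, fun s => by simp⟩
      · have hnext := ih (t + 1) (by omega)
        have hint : BM2 (fun s a => (r t s a + (∫ s', Vpol T P ν β p r (t + 1) s' ∂(P t (s, a)))
            - β * Real.log (p t s a)) * p t s a) :=
          (((hrB t).add (hnext.kernelInt (P t))).sub ((hlogpB t).const_mul β)).mul (hpB t)
        have he : Vpol T P ν β p r t = fun s => ∫ a, (r t s a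
            + (∫ s', Vpol T P ν β p r (t + 1) s' ∂(P t (s, a)))
            - β * Real.log (p t s a)) * p t s a ∂ν :=
          funext fun s => by rw [Vpol, if_neg hTt]
        rw [he]; exact hint.intNu
  exact fun t => H (T + 1) t (by omega)

end IRLAux

open IRL IRLAux Filter


/-- **Advantage characterization of soft-optimality** (Proposition `opt_cond`, part 1).
For `β > 0`, a bounded measurable reward `r`, and a Markov policy `π` with bounded
log-`ν`-densities, `π` coincides with the soft-optimal policy `π*_r` (as measures
`π_t(·|s) = π*_{t,r}(·|s)` for all `t ∈ {1,…,T}` and all `s`) if and only if the regularized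
advantage vanishes: `A^π_{t,r}(s,a) = 0` for all `t, s` and `ν`-a.e. `a`. -/
theorem soft_optimality_iff_advantage_vanishes
    {S A : Type*} [MeasurableSpace S] [MeasurableSpace A]
    (T : ℕ) (hT : 1 ≤ T)
    (P0 : Measure S) [IsProbabilityMeasure P0]
    (P : ℕ → Kernel (S × A) S) [∀ t, IsMarkovKernel (P t)]
    (ν : Measure A) [IsFiniteMeasure ν] (hν : ν Set.univ ≠ 0)
    (β : ℝ) (hβ : 0 < β)
    (r : ℕ → S → A → ℝ) (hr : IRL.IsBddReward r)
    (p : ℕ → S → A → ℝ) (hp : IRL.IsPolicyDensity ν p) (hlog : IRL.HasBddLogDensity p) :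
    (∀ t, 1 ≤ t → t ≤ T → ∀ s : S,
        ν.withDensity (fun a => ENNReal.ofReal (p t s a))
          = ν.withDensity (fun a => ENNReal.ofReal (IRL.piStar T P ν β r t s a)))
      ↔ (∀ t, 1 ≤ t → t ≤ T → ∀ s : S, ∀ᵐ a ∂ν, IRL.Apol T P ν β p r t s a = 0) := by
  obtain ⟨hpm, hpnn, hpint⟩ := hp
  have hβ0 : β ≠ 0 := ne_of_gt hβ
  have hc : ∀ x : ℝ, β * (x / β) = x := fun x => by field_simp
  have hppos : ∀ t s a, 0 < p t s a := fun t => (hlog t).1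
  have hVs : ∀ t, BM (Vstar T P ν β r t) := Vstar_BM T P ν hν hβ hr
  have hQs : ∀ t, BM2 (Qstar T P ν β r t) := fun t =>
    BM2.add ⟨(hr t).1, (hr t).2⟩ ((hVs (t + 1)).kernelInt (P t))
  have hVstar_eq : ∀ t, ¬ T < t → ∀ s, Vstar T P ν β r t s
      = β * Real.log (∫ a, Real.exp (Qstar T P ν β r t s a / β) ∂ν) := fun t ht s => by
    rw [Vstar, if_neg ht]; rfl
  have hIpos : ∀ t s, 0 < ∫ a, Real.exp (Qstar T P ν β r t s a / β) ∂ν := fun t s =>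
    lse_pos hν hβ (hQs t) s
  have hshift : ∀ t s (v : ℝ), ∫ a, Real.exp ((Qstar T P ν β r t s a - v) / β) ∂ν
      = (∫ a, Real.exp (Qstar T P ν β r t s a / β) ∂ν) / Real.exp (v / β) := by
    intro t s v
    simp_rw [sub_div, Real.exp_sub]
    exact integral_div _ _
  have hpiStar_int : ∀ t, ¬ T < t → ∀ s, ∫ a, piStar T P ν β r t s a ∂ν = 1 := by
    intro t ht s
    have h1 : ∫ a, piStar T P ν β r t s a ∂ν
        = (∫ a, Real.exp (Qstar T P ν β r t s a / β) ∂ν)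
          / Real.exp (Vstar T P ν β r t s / β) := hshift t s _
    rw [h1, hVstar_eq t ht s, mul_div_cancel_left₀ _ hβ0, Real.exp_log (hIpos t s), div_self (ne_of_gt (hIpos t s))]
  constructor
  · -- π = π* ⇒ advantage vanishes
    intro hpi
    have hdens : ∀ t, 1 ≤ t → t ≤ T → ∀ s, ∀ᵐ a ∂ν, p t s a = piStar T P ν β r t s a := by
      intro t h1 h2 s
      have hmp : Measurable fun a => ENNReal.ofReal (p t s a) :=
        ((hpm t).comp measurable_prodMk_left).ennreal_ofReal
      have hmpi : Measurable fun a => piStar T P ν β r t s a :=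
        ((((hQs t).meas_slice s).sub measurable_const).div_const β).exp
      have h := (withDensity_eq_iff_of_sigmaFinite hmp.aemeasurable
        hmpi.ennreal_ofReal.aemeasurable).mp (hpi t h1 h2 s)
      filter_upwards [h] with a ha
      exact (ENNReal.ofReal_eq_ofReal_iff (hpnn t s a) (Real.exp_pos _).le).mp ha
    have hkey : ∀ t, 1 ≤ t → ∀ s, Vpol T P ν β p r t s = Vstar T P ν β r t s := by
      have H : ∀ k t, T + 1 - t ≤ k → 1 ≤ t → ∀ s,
          Vpol T P ν β p r t s = Vstar T P ν β r t s := by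
        intro k
        induction k with
        | zero =>
          intro t ht h1 s
          have hTt : T < t := by omega
          rw [Vpol, if_pos hTt, Vstar, if_pos hTt]
        | succ k ih =>
          intro t ht h1 s
          by_cases hTt : T < t
          · rw [Vpol, if_pos hTt, Vstar, if_pos hTt]
          · have hfun : Vpol T P ν β p r (t + 1) = Vstar T P ν β r (t + 1) :=
              funext (ih (t + 1) (by omega) (by omega))
            rw [Vpol, if_neg hTt]
            simp only [hfun]
            have hstep : ∫ a, (r t s a + (∫ s', Vstar T P ν β r (t + 1) s' ∂(P t (s, a)))
                - β * Real.log (p t s a)) * p t s a ∂ν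
                = ∫ a, Vstar T P ν β r t s * piStar T P ν β r t s a ∂ν := by
              refine integral_congr_ae ?_
              filter_upwards [hdens t h1 (not_lt.mp hTt) s] with a ha
              rw [ha]
              have hQd : r t s a + (∫ s', Vstar T P ν β r (t + 1) s' ∂(P t (s, a)))
                  = Qstar T P ν β r t s a := rfl
              have hlogpi : Real.log (piStar T P ν β r t s a)
                  = (Qstar T P ν β r t s a - Vstar T P ν β r t s) / β := Real.log_exp _
              rw [hQd, hlogpi, hc]
              ring
            rw [hstep, integral_const_mul, hpiStar_int t hTt s, mul_one]
      exact fun t h1 s => H (T + 1) t (by omega) h1 s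
    intro t h1 h2 s
    have hfun : Vpol T P ν β p r (t + 1) = Vstar T P ν β r (t + 1) :=
      funext (hkey (t + 1) (by omega))
    have hQeq : ∀ a, Qpol T P ν β p r t s a = Qstar T P ν β r t s a := fun a => by
      unfold Qpol Qstar; rw [hfun]
    filter_upwards [hdens t h1 h2 s] with a ha
    unfold Apol
    rw [hQeq a, hkey t h1 s, ha]
    have hlogpi : Real.log (piStar T P ν β r t s a)
        = (Qstar T P ν β r t s a - Vstar T P ν β r t s) / β := Real.log_exp _
    rw [hlogpi, hc]
    ring
  · -- advantage vanishes ⇒ π = π*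
    intro hA
    have hkey : ∀ t, 1 ≤ t → ∀ s, Vpol T P ν β p r t s = Vstar T P ν β r t s := by
      have H : ∀ k t, T + 1 - t ≤ k → 1 ≤ t → ∀ s,
          Vpol T P ν β p r t s = Vstar T P ν β r t s := by
        intro k
        induction k with
        | zero =>
          intro t ht h1 s
          have hTt : T < t := by omega
          rw [Vpol, if_pos hTt, Vstar, if_pos hTt]
        | succ k ih =>
          intro t ht h1 s
          by_cases hTt : T < t
          · rw [Vpol, if_pos hTt, Vstar, if_pos hTt]
          · have hfun : Vpol T P ν β p r (t + 1) = Vstar T P ν β r (t + 1) :=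
              funext (ih (t + 1) (by omega) (by omega))
            have hQeq : ∀ a, Qpol T P ν β p r t s a = Qstar T P ν β r t s a := fun a => by
              unfold Qpol Qstar; rw [hfun]
            have hae : ∀ᵐ a ∂ν, p t s a
                = Real.exp ((Qstar T P ν β r t s a - Vpol T P ν β p r t s) / β) := by
              filter_upwards [hA t h1 (not_lt.mp hTt) s] with a ha
              unfold Apol at ha
              rw [hQeq a] at ha
              have hlogp : Real.log (p t s a)
                  = (Qstar T P ν β r t s a - Vpol T P ν β p r t s) / β := by
                rw [eq_div_iff hβ0]
                linear_combination -ha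
              rw [← hlogp, Real.exp_log (hppos t s a)]
            have h1' : (1 : ℝ) = (∫ a, Real.exp (Qstar T P ν β r t s a / β) ∂ν)
                / Real.exp (Vpol T P ν β p r t s / β) := by
              calc (1 : ℝ) = ∫ a, p t s a ∂ν := (hpint t s).symm
                _ = ∫ a, Real.exp ((Qstar T P ν β r t s a - Vpol T P ν β p r t s) / β) ∂ν :=
                    integral_congr_ae hae
                _ = _ := hshift t s _
            rw [eq_div_iff (Real.exp_pos _).ne', one_mul] at h1'
            have hlogI := congrArg Real.log h1'
            rw [Real.log_exp] at hlogI
            rw [hVstar_eq t hTt s, ← hlogI]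
            exact (hc _).symm
      exact fun t h1 s => H (T + 1) t (by omega) h1 s
    intro t h1 h2 s
    have hfun : Vpol T P ν β p r (t + 1) = Vstar T P ν β r (t + 1) :=
      funext (hkey (t + 1) (by omega))
    have hQeq : ∀ a, Qpol T P ν β p r t s a = Qstar T P ν β r t s a := fun a => by
      unfold Qpol Qstar; rw [hfun]
    have hae : ∀ᵐ a ∂ν, p t s a = piStar T P ν β r t s a := by
      filter_upwards [hA t h1 h2 s] with a ha
      unfold Apol at ha
      rw [hQeq a, hkey t h1 s] at ha
      have hlogp : Real.log (p t s a)
          = (Qstar T P ν β r t s a - Vstar T P ν β r t s) / β := by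
        rw [eq_div_iff hβ0]
        linear_combination -ha
      rw [← Real.exp_log (hppos t s a), hlogp]
      rfl
    exact withDensity_congr_ae (by filter_upwards [hae] with a ha; rw [ha])
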